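/- Let f be an excursion. Then the functions d_L[f], d_T[f] and d_V[f] = d_T[f] + 2·d_L[f] are continuous on [0,1]². Consequently, the quotient metric spaces obtained from [0,1] by identifying points at pseudo-distance zero under d_L[f], d_T[f], and d_V[f] respectively are compact. -/

import Mathlib

open Set Filter Topology
open scoped Classical

noncomputable section

/-- Left limit of `f` at `t`, with the convention `f(0−) = 0`. -/
def lm (f : ℝ → ℝ) (t : ℝ) : ℝ := if t = 0 then 0 else Function.leftLim f t

/-- The jump `Δ_t(f) = f t − f(t−)`. -/
def jump (f : ℝ → ℝ) (t : ℝ) : ℝ := f t - lm f t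

/-- `inf_{[s,t]} f`. -/
def infIcc (f : ℝ → ℝ) (s t : ℝ) : ℝ := sInf (f '' Icc s t)

/-- An excursion: a càdlàg function on `[0,1]`, nonnegative, vanishing at `1` (and
extended by `0` outside `[0,1]`), all of whose jumps are nonnegative. -/
structure IsExcursion (f : ℝ → ℝ) : Prop where
  nonneg : ∀ t ∈ Icc (0:ℝ) 1, 0 ≤ f t
  zero_outside : ∀ t, t ∉ Icc (0:ℝ) 1 → f t = 0
  rightCont : ∀ t ∈ Ico (0:ℝ) 1, Tendsto f (𝓝[>] t) (𝓝 (f t))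
  leftLimEx : ∀ t ∈ Ioc (0:ℝ) 1, Tendsto f (𝓝[<] t) (𝓝 (Function.leftLim f t))
  one : f 1 = 0
  jump_nonneg : ∀ t ∈ Icc (0:ℝ) 1, 0 ≤ jump f t

/-- The genealogical relation `s ⪯_f t` : `s ≤ t` and `f(s−) ≤ inf_{[s,t]} f`. -/
def pre (f : ℝ → ℝ) (s t : ℝ) : Prop := s ≤ t ∧ lm f s ≤ infIcc f s t

/-- `x_s^t(f) = 1_{s ≤ t} · max(inf_{[s,t]} f − f(s−), 0)`. -/
def xst (f : ℝ → ℝ) (s t : ℝ) : ℝ := if s ≤ t then max (infIcc f s t - lm f s) 0 else 0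

/-- The most recent common ancestor `s ∧_f t`. -/
def mrca (f : ℝ → ℝ) (s t : ℝ) : ℝ := sSup {r : ℝ | 0 ≤ r ∧ pre f r s ∧ pre f r t}

/-- `δ_t(a,b) = min(|a−b|, Δ_t(f) − |a−b|)`, the circle pseudo-distance on `[0, Δ_t(f)]`. -/
def cdel (f : ℝ → ℝ) (t a b : ℝ) : ℝ := min |a - b| (jump f t - |a - b|)

/-- `d_O(s,t) = ∑_{s ≺_f r ⪯_f t} δ_r(0, x_r^t)`. -/
def dO (f : ℝ → ℝ) (s t : ℝ) : ℝ :=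
  ∑' r : ℝ, if pre f s r ∧ s < r ∧ pre f r t then cdel f r 0 (xst f r t) else 0

/-- `d_T(s,t) = f t − inf_{[s,t]} f − ∑_{s ≺_f r ⪯_f t} x_r^t`, intended for `s ⪯_f t`. -/
def dTanc (f : ℝ → ℝ) (s t : ℝ) : ℝ :=
  f t - infIcc f s t - ∑' r : ℝ, if pre f s r ∧ s < r ∧ pre f r t then xst f r t else 0

/-- The looptree pseudo-distance `d_L[f]`. -/
def dL (f : ℝ → ℝ) (s t : ℝ) : ℝ :=
  cdel f (mrca f s t) (xst f (mrca f s t) s) (xst f (mrca f s t) t)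
    + dO f (mrca f s t) s + dO f (mrca f s t) t

/-- The tree pseudo-distance `d_T[f]`. -/
def dT (f : ℝ → ℝ) (s t : ℝ) : ℝ := dTanc f (mrca f s t) s + dTanc f (mrca f s t) t

/-- The vernation pseudo-distance `d_V[f] = d_T[f] + 2·d_L[f]`. -/
def dV (f : ℝ → ℝ) (s t : ℝ) : ℝ := dT f s t + 2 * dL f s t

/-- `Jf(t) = ∑_{r ⪯_f t} x_r^t(f)`. -/
def Jop (f : ℝ → ℝ) (t : ℝ) : ℝ := ∑' r : ℝ, if pre f r t then xst f r t else 0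

/-- `J^ε f(t) = ∑_{r ⪯_f t, Δ_r(f) ≥ ε} x_r^t(f)`. -/
def Jeps (f : ℝ → ℝ) (ε : ℝ) (t : ℝ) : ℝ :=
  ∑' r : ℝ, if pre f r t ∧ ε ≤ jump f r then xst f r t else 0

/-- Pure jump growth (PJG) excursion: `f(t) = ∑_{r ⪯_f t} x_r^t(f)` on `[0,1]`. -/
def IsPJG (f : ℝ → ℝ) : Prop := ∀ t ∈ Icc (0:ℝ) 1, f t = Jop f t

/-- An increasing bijection from `[0,1]` onto itself. -/
def IncBij (l : ℝ → ℝ) : Prop :=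
  StrictMonoOn l (Icc (0:ℝ) 1) ∧ Set.BijOn l (Icc (0:ℝ) 1) (Icc (0:ℝ) 1)

/-- The Skorokhod distance `ρ` on functions `[0,1] → ℝ`. -/
def skor (f g : ℝ → ℝ) : ℝ :=
  sInf {c : ℝ | 0 ≤ c ∧ ∃ l : ℝ → ℝ, IncBij l ∧
    ∀ x ∈ Icc (0:ℝ) 1, |l x - x| ≤ c ∧ |f x - g (l x)| ≤ c}

namespace Vern

variable {f : ℝ → ℝ}

lemma ex_nonneg (hf : IsExcursion f) (t : ℝ) : 0 ≤ f t := by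
  by_cases ht : t ∈ Icc (0:ℝ) 1
  · exact hf.nonneg t ht
  · rw [hf.zero_outside t ht]

lemma infIcc_le (hf : IsExcursion f) {s t v : ℝ} (hv : v ∈ Icc s t) : infIcc f s t ≤ f v :=
  csInf_le ⟨0, by rintro x ⟨u, -, rfl⟩; exact ex_nonneg hf u⟩ ⟨v, hv, rfl⟩

lemma le_infIcc {c s t : ℝ} (hst : s ≤ t) (h : ∀ v ∈ Icc s t, c ≤ f v) : c ≤ infIcc f s t :=
  le_csInf ((nonempty_Icc.2 hst).image f) (by rintro x ⟨u, hu, rfl⟩; exact h u hu)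

lemma infIcc_nonneg (hf : IsExcursion f) (s t : ℝ) : 0 ≤ infIcc f s t := by
  rcases le_or_gt s t with h | h
  · exact le_infIcc h fun v _ => ex_nonneg hf v
  · rw [infIcc, Icc_eq_empty (not_le.2 h), image_empty]
    exact le_of_eq Real.sInf_empty.symm

lemma infIcc_self (s : ℝ) : infIcc f s s = f s := by
  rw [infIcc, Icc_self, image_singleton, csInf_singleton]

lemma infIcc_anti (hf : IsExcursion f) {s s' t t' : ℝ} (h1 : s' ≤ s) (h2 : t ≤ t') (h : s ≤ t) :
    infIcc f s' t' ≤ infIcc f s t :=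
  csInf_le_csInf ⟨0, by rintro x ⟨u, -, rfl⟩; exact ex_nonneg hf u⟩
    ((nonempty_Icc.2 h).image f) (image_mono (Icc_subset_Icc h1 h2))

lemma infIcc_min (hf : IsExcursion f) {a b c : ℝ} (hab : a ≤ b) (hbc : b ≤ c) :
    infIcc f a c = min (infIcc f a b) (infIcc f b c) := by
  rw [infIcc, ← Icc_union_Icc_eq_Icc hab hbc, image_union,
    csInf_union ⟨0, by rintro x ⟨u, -, rfl⟩; exact ex_nonneg hf u⟩ ((nonempty_Icc.2 hab).image f)
      ⟨0, by rintro x ⟨u, -, rfl⟩; exact ex_nonneg hf u⟩ ((nonempty_Icc.2 hbc).image f)]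
  rfl

lemma lm_nonneg (hf : IsExcursion f) {t : ℝ} (ht : t ∈ Icc (0:ℝ) 1) : 0 ≤ lm f t := by
  rcases eq_or_lt_of_le ht.1 with h0 | h0
  · simp [lm, ← h0]
  · rw [lm, if_neg (ne_of_gt h0)]
    exact ge_of_tendsto (hf.leftLimEx t ⟨h0, ht.2⟩)
      (by filter_upwards with x using ex_nonneg hf x)

lemma lm_le_self (hf : IsExcursion f) {t : ℝ} (ht : t ∈ Icc (0:ℝ) 1) : lm f t ≤ f t := by
  have h := hf.jump_nonneg t ht
  rw [jump] at h; linarith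

lemma infIcc_le_lm (hf : IsExcursion f) {s t : ℝ} (h0 : 0 ≤ s) (hst : s < t) (h1 : t ≤ 1) :
    infIcc f s t ≤ lm f t := by
  have ht0 : (0:ℝ) < t := lt_of_le_of_lt h0 hst
  rw [lm, if_neg (ne_of_gt ht0)]
  refine ge_of_tendsto (hf.leftLimEx t ⟨ht0, h1⟩) ?_
  filter_upwards [Ico_mem_nhdsLT_of_mem (⟨hst, le_refl t⟩ : t ∈ Ioc s t)] with v hv
  exact infIcc_le hf ⟨hv.1, hv.2.le⟩

lemma pre_refl (hf : IsExcursion f) {t : ℝ} (ht : t ∈ Icc (0:ℝ) 1) : pre f t t :=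
  ⟨le_refl t, by rw [infIcc_self]; exact lm_le_self hf ht⟩

lemma pre_zero (hf : IsExcursion f) {t : ℝ} (ht : 0 ≤ t) : pre f 0 t :=
  ⟨ht, by simpa [lm] using infIcc_nonneg hf 0 t⟩

lemma pre_trans (hf : IsExcursion f) {a b c : ℝ} (h0 : 0 ≤ a) (h1 : c ≤ 1)
    (hab : pre f a b) (hbc : pre f b c) : pre f a c := by
  refine ⟨hab.1.trans hbc.1, ?_⟩
  rcases eq_or_lt_of_le hab.1 with heq | hlt
  · rw [heq]; exact heq ▸ hbc.2
  · rw [infIcc_min hf hab.1 hbc.1]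
    refine le_min hab.2 (le_trans (hab.2.trans ?_) hbc.2)
    exact infIcc_le_lm hf h0 hlt (hbc.1.trans h1)

lemma pre_chain (hf : IsExcursion f) {r1 r2 t : ℝ} (h1 : t ≤ 1)
    (ha : pre f r1 t) (hb : pre f r2 t) (h12 : r1 ≤ r2) : pre f r1 r2 :=
  ⟨h12, le_trans ha.2 (infIcc_anti hf (le_refl r1) hb.1 h12)⟩

lemma pre_csSup (hf : IsExcursion f) {A : Set ℝ} {s : ℝ} (hs1 : s ≤ 1) (hne : A.Nonempty)
    (h0 : ∀ r ∈ A, 0 ≤ r) (hA : ∀ r ∈ A, pre f r s) : pre f (sSup A) s := by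
  have hbdd : BddAbove A := ⟨s, fun r hr => (hA r hr).1⟩
  have hms : sSup A ≤ s := csSup_le hne fun r hr => (hA r hr).1
  obtain ⟨a0, ha0⟩ := hne
  have hm0 : 0 ≤ sSup A := le_trans (h0 a0 ha0) (le_csSup hbdd ha0)
  refine ⟨hms, ?_⟩
  rcases eq_or_lt_of_le hm0 with h | h
  · rw [lm, if_pos h.symm]; exact infIcc_nonneg hf _ _
  · rw [lm, if_neg (ne_of_gt h)]
    by_contra hcon
    push_neg at hcon
    set m := sSup A with hm
    set L := Function.leftLim f m with hL
    set c := infIcc f m s with hc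
    have hε : 0 < (L - c) / 2 := by linarith
    have hm1 : m ≤ 1 := hms.trans hs1
    have hten := hf.leftLimEx m ⟨h, hm1⟩
    have hU : ∀ᶠ v in 𝓝[<] m, |f v - L| < (L - c) / 2 := by
      simpa [Real.dist_eq] using Metric.tendsto_nhds.1 hten ((L - c)/2) hε
    obtain ⟨l, hl, hIoo⟩ := mem_nhdsLT_iff_exists_Ioo_subset.1 hU
    obtain ⟨r, hrA, hrgt⟩ := exists_lt_of_lt_csSup ⟨a0, ha0⟩ (show max l 0 < m from max_lt hl h)
    have hrm : r ≤ m := le_csSup hbdd hrA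
    rcases eq_or_lt_of_le hrm with heq | hrm
    · have h2 := (hA r hrA).2
      rw [heq] at h2
      rw [lm, if_neg (ne_of_gt h)] at h2
      exact absurd h2 (not_le.2 hcon)
    · have hr0 : 0 < r := lt_of_le_of_lt (le_max_right l 0) hrgt
      have hlr : l < r := lt_of_le_of_lt (le_max_left l 0) hrgt
      have hLr := hf.leftLimEx r ⟨hr0, hrm.le.trans hm1⟩
      have hLrc : Function.leftLim f r ≤ c := by
        have h2 := (hA r hrA).2
        rw [lm, if_neg (ne_of_gt hr0)] at h2
        exact h2.trans (infIcc_anti hf hrm.le (le_refl s) hms)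
      have hev : ∀ᶠ v in 𝓝[<] r, |f v - Function.leftLim f r| < (L - c) / 2 := by
        simpa [Real.dist_eq] using Metric.tendsto_nhds.1 hLr ((L - c)/2) hε
      obtain ⟨v, hv1, hv2⟩ := (hev.and (Ioo_mem_nhdsLT_of_mem (⟨hlr, le_refl r⟩ : r ∈ Ioc l r))).exists
      have hvm : v ∈ Ioo l m := ⟨hv2.1, hv2.2.trans hrm⟩
      have h3 := hIoo hvm
      rw [mem_setOf_eq] at h3
      have h4 := abs_sub_lt_iff.1 h3
      have h5 := abs_sub_lt_iff.1 hv1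
      linarith [h4.2, h5.1, hLrc]

lemma mrca_spec (hf : IsExcursion f) {s t : ℝ} (hs : s ∈ Icc (0:ℝ) 1) (ht : t ∈ Icc (0:ℝ) 1) :
    0 ≤ mrca f s t ∧ pre f (mrca f s t) s ∧ pre f (mrca f s t) t := by
  have hmem : (0:ℝ) ∈ {r : ℝ | 0 ≤ r ∧ pre f r s ∧ pre f r t} :=
    ⟨le_refl 0, pre_zero hf hs.1, pre_zero hf ht.1⟩
  have hbdd : BddAbove {r : ℝ | 0 ≤ r ∧ pre f r s ∧ pre f r t} := ⟨s, fun r hr => hr.2.1.1⟩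
  refine ⟨le_csSup hbdd hmem, ?_, ?_⟩
  · exact pre_csSup hf hs.2 ⟨0, hmem⟩ (fun r hr => hr.1) (fun r hr => hr.2.1)
  · exact pre_csSup hf ht.2 ⟨0, hmem⟩ (fun r hr => hr.1) (fun r hr => hr.2.2)

lemma mrca_ge (hf : IsExcursion f) {s t r : ℝ} (h0 : 0 ≤ r) (h1 : pre f r s) (h2 : pre f r t) :
    r ≤ mrca f s t :=
  le_csSup ⟨s, fun x hx => hx.2.1.1⟩ ⟨h0, h1, h2⟩

lemma mrca_comm (f : ℝ → ℝ) (s t : ℝ) : mrca f s t = mrca f t s := by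
  unfold mrca; congr 1; ext r
  exact ⟨fun h => ⟨h.1, h.2.2, h.2.1⟩, fun h => ⟨h.1, h.2.2, h.2.1⟩⟩

lemma mrca_self (hf : IsExcursion f) {s : ℝ} (hs : s ∈ Icc (0:ℝ) 1) : mrca f s s = s :=
  le_antisymm (mrca_spec hf hs hs).2.1.1 (mrca_ge hf hs.1 (pre_refl hf hs) (pre_refl hf hs))

end Vern
namespace Vern

variable {f : ℝ → ℝ}

lemma xst_nonneg (f : ℝ → ℝ) (s t : ℝ) : 0 ≤ xst f s t := by
  unfold xst; split
  · exact le_max_right _ _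
  · exact le_refl 0

lemma xst_of_pre {r t : ℝ} (h : pre f r t) : xst f r t = infIcc f r t - lm f r := by
  rw [xst, if_pos h.1, max_eq_left (sub_nonneg.2 h.2)]

lemma xst_le_jump (hf : IsExcursion f) {r t : ℝ} (h : pre f r t) : xst f r t ≤ jump f r := by
  rw [xst_of_pre h, jump]
  have h2 : infIcc f r t ≤ f r := infIcc_le hf ⟨le_refl r, h.1⟩
  linarith

lemma xst_self (hf : IsExcursion f) {r : ℝ} (hr : r ∈ Icc (0:ℝ) 1) : xst f r r = jump f r := by
  rw [xst_of_pre (pre_refl hf hr), infIcc_self, jump]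

lemma cdel_nonneg {w a b : ℝ} (ha0 : 0 ≤ a) (hb0 : 0 ≤ b) (ha : a ≤ jump f w)
    (hb : b ≤ jump f w) : 0 ≤ cdel f w a b :=
  le_min (abs_nonneg _) (by rcases abs_cases (a - b) with ⟨h1, _⟩ | ⟨h1, _⟩ <;> rw [h1] <;> linarith)

lemma cdel_self {w : ℝ} (h : 0 ≤ jump f w) (a : ℝ) : cdel f w a a = 0 := by
  rw [cdel, sub_self, abs_zero, sub_zero]; exact min_eq_left h

lemma cdel_comm (f : ℝ → ℝ) (w a b : ℝ) : cdel f w a b = cdel f w b a := by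
  rw [cdel, cdel, abs_sub_comm]

lemma cdel_zero_right {w b : ℝ} (hb : 0 ≤ b) : cdel f w 0 b ≤ b := by
  rw [cdel, zero_sub, abs_neg, abs_of_nonneg hb]; exact min_le_left _ _

lemma cdel_zero_jump {w : ℝ} (h : 0 ≤ jump f w) : cdel f w 0 (jump f w) = 0 := by
  rw [cdel, zero_sub, abs_neg, abs_of_nonneg h, sub_self]
  exact min_eq_right h

lemma cdel_triangle {w a b c : ℝ} (ha : a ∈ Icc 0 (jump f w)) (hb : b ∈ Icc 0 (jump f w))
    (hc : c ∈ Icc 0 (jump f w)) : cdel f w a c ≤ cdel f w a b + cdel f w b c := by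
  obtain ⟨ha0, ha1⟩ := ha; obtain ⟨hb0, hb1⟩ := hb; obtain ⟨hc0, hc1⟩ := hc
  have h1 : |a - c| ≤ |a - b| + |b - c| := abs_sub_le a b c
  have h2 : |b - c| ≤ |a - b| + |a - c| := by
    calc |b - c| ≤ |b - a| + |a - c| := abs_sub_le b a c
    _ = |a - b| + |a - c| := by rw [abs_sub_comm]
  have h3 : |a - b| ≤ |a - c| + |b - c| := by
    calc |a - b| ≤ |a - c| + |c - b| := abs_sub_le a c b
    _ = |a - c| + |b - c| := by rw [abs_sub_comm c b]
  have h4 : |a - b| + |b - c| + |a - c| ≤ 2 * jump f w := by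
    rcases abs_cases (a - b) with ⟨e1, _⟩ | ⟨e1, _⟩ <;>
    rcases abs_cases (b - c) with ⟨e2, _⟩ | ⟨e2, _⟩ <;>
    rcases abs_cases (a - c) with ⟨e3, _⟩ | ⟨e3, _⟩ <;>
    rw [e1, e2, e3] <;> linarith
  rw [cdel, cdel, cdel]
  rcases min_cases |a - b| (jump f w - |a - b|) with ⟨e1, _⟩ | ⟨e1, _⟩ <;>
  rcases min_cases |b - c| (jump f w - |b - c|) with ⟨e2, _⟩ | ⟨e2, _⟩ <;>
  rw [e1, e2]
  · exact le_trans (min_le_left _ _) h1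
  · exact le_trans (min_le_right _ _) (by linarith)
  · exact le_trans (min_le_right _ _) (by linarith)
  · exact le_trans (min_le_left _ _) (by linarith)

lemma C_mem {a b r : ℝ} (h0 : 0 ≤ a) (h1 : b ≤ 1) (h : pre f a r ∧ a < r ∧ pre f r b) :
    r ∈ Icc (0:ℝ) 1 := ⟨h0.trans h.2.1.le, h.2.2.1.trans h1⟩

lemma sum_xst_le (hf : IsExcursion f) :
    ∀ (n : ℕ) (F : Finset ℝ), F.card = n → ∀ {a b : ℝ}, 0 ≤ a → b ≤ 1 → a ≤ b →
    (∀ r ∈ F, pre f a r ∧ a < r ∧ pre f r b) →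
    ∑ r ∈ F, xst f r b ≤ f b - infIcc f a b := by
  intro n
  induction n using Nat.strong_induction_on with
  | _ n ih =>
    intro F hFn a b ha hb hab hF
    rcases F.eq_empty_or_nonempty with rfl | hne
    · simpa using sub_nonneg.2 (infIcc_le hf ⟨hab, le_refl b⟩)
    · set r1 := F.min' hne with hr1
      have hr1F : r1 ∈ F := F.min'_mem hne
      obtain ⟨hpre1, hlt1, hpre1b⟩ := hF r1 hr1F
      have hstep : ∀ r ∈ F.erase r1, pre f r1 r ∧ r1 < r ∧ pre f r b := by
        intro r hr
        obtain ⟨hrne, hrF⟩ := Finset.mem_erase.1 hr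
        obtain ⟨-, -, hrb⟩ := hF r hrF
        have hle : r1 ≤ r := F.min'_le r hrF
        exact ⟨pre_chain hf hb hpre1b hrb hle, lt_of_le_of_ne hle (Ne.symm hrne), hrb⟩
      have hcard : (F.erase r1).card < n := by
        rw [Finset.card_erase_of_mem hr1F, hFn]
        exact Nat.sub_lt (hFn ▸ Finset.card_pos.2 hne) one_pos
      have hrec := ih _ hcard (F.erase r1) rfl (ha.trans hlt1.le) hb hpre1b.1 hstep
      rw [← Finset.add_sum_erase F _ hr1F]
      have hx1 : xst f r1 b = infIcc f r1 b - lm f r1 := xst_of_pre hpre1b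
      have hlm : infIcc f a b ≤ lm f r1 :=
        le_trans (infIcc_anti hf (le_refl a) hpre1b.1 hlt1.le)
          (infIcc_le_lm hf ha hlt1 (hpre1b.1.trans hb))
      linarith

lemma sum_xst_lt_le (hf : IsExcursion f) :
    ∀ (n : ℕ) (F : Finset ℝ), F.card = n → ∀ {a b : ℝ}, 0 ≤ a → b ≤ 1 → a < b →
    (∀ r ∈ F, (pre f a r ∧ a < r ∧ pre f r b) ∧ r < b) →
    ∑ r ∈ F, xst f r b ≤ lm f b - infIcc f a b := by
  intro n
  induction n using Nat.strong_induction_on with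
  | _ n ih =>
    intro F hFn a b ha hb hab hF
    rcases F.eq_empty_or_nonempty with rfl | hne
    · simpa using sub_nonneg.2 (infIcc_le_lm hf ha hab hb)
    · set r1 := F.min' hne with hr1
      have hr1F : r1 ∈ F := F.min'_mem hne
      obtain ⟨⟨hpre1, hlt1, hpre1b⟩, hr1b⟩ := hF r1 hr1F
      have hstep : ∀ r ∈ F.erase r1, (pre f r1 r ∧ r1 < r ∧ pre f r b) ∧ r < b := by
        intro r hr
        obtain ⟨hrne, hrF⟩ := Finset.mem_erase.1 hr
        obtain ⟨⟨-, -, hrb⟩, hrb'⟩ := hF r hrF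
        have hle : r1 ≤ r := F.min'_le r hrF
        exact ⟨⟨pre_chain hf hb hpre1b hrb hle, lt_of_le_of_ne hle (Ne.symm hrne), hrb⟩, hrb'⟩
      have hcard : (F.erase r1).card < n := by
        rw [Finset.card_erase_of_mem hr1F, hFn]
        exact Nat.sub_lt (hFn ▸ Finset.card_pos.2 hne) one_pos
      have hrec := ih _ hcard (F.erase r1) rfl (ha.trans hlt1.le) hb hr1b hstep
      rw [← Finset.add_sum_erase F _ hr1F]
      have hx1 : xst f r1 b = infIcc f r1 b - lm f r1 := xst_of_pre hpre1b
      have hlm : infIcc f a b ≤ lm f r1 :=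
        le_trans (infIcc_anti hf (le_refl a) hpre1b.1 hlt1.le)
          (infIcc_le_lm hf ha hlt1 (hpre1b.1.trans hb))
      linarith

lemma summable_gx (hf : IsExcursion f) {a b : ℝ} (ha : 0 ≤ a) (hb : b ≤ 1) :
    Summable (fun r => if pre f a r ∧ a < r ∧ pre f r b then xst f r b else 0) := by
  rcases le_or_gt a b with hab | hab
  · refine summable_of_sum_le (c := f b - infIcc f a b) ?_ ?_
    · intro r
      simp only [Pi.zero_apply]
      split
      · exact xst_nonneg f _ _
      · exact le_refl 0
    · intro u
      rw [← Finset.sum_filter]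
      exact sum_xst_le hf _ _ rfl ha hb hab (fun r hr => (Finset.mem_filter.1 hr).2)
  · have h : ∀ r : ℝ, (if pre f a r ∧ a < r ∧ pre f r b then xst f r b else 0) = 0 := by
      intro r; rw [if_neg]; rintro ⟨h1, h2, h3⟩
      have := h3.1; linarith
    exact (funext h : _ = fun _ => (0:ℝ)) ▸ summable_zero

lemma summable_gc (hf : IsExcursion f) {a b : ℝ} (ha : 0 ≤ a) (hb : b ≤ 1) :
    Summable (fun r => if pre f a r ∧ a < r ∧ pre f r b then cdel f r 0 (xst f r b) else 0) := by
  refine Summable.of_norm_bounded (summable_gx hf ha hb) ?_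
  intro r
  by_cases h : pre f a r ∧ a < r ∧ pre f r b
  · rw [if_pos h, if_pos h, Real.norm_eq_abs,
      abs_of_nonneg (cdel_nonneg (le_refl 0) (xst_nonneg f r b)
        (hf.jump_nonneg r (C_mem ha hb h)) (xst_le_jump hf h.2.2))]
    exact cdel_zero_right (xst_nonneg f r b)
  · rw [if_neg h, if_neg h, norm_zero]

lemma tsum_gx_le (hf : IsExcursion f) {a b : ℝ} (ha : 0 ≤ a) (hb : b ≤ 1) (hab : a ≤ b) :
    (∑' r : ℝ, if pre f a r ∧ a < r ∧ pre f r b then xst f r b else 0) ≤ f b - infIcc f a b :=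
  Summable.tsum_le_of_sum_le (summable_gx hf ha hb) (fun u => by
    rw [← Finset.sum_filter]
    exact sum_xst_le hf _ _ rfl ha hb hab (fun r hr => (Finset.mem_filter.1 hr).2))

lemma tsum_gx_nonneg (f : ℝ → ℝ) (a b : ℝ) :
    0 ≤ ∑' r : ℝ, if pre f a r ∧ a < r ∧ pre f r b then xst f r b else 0 :=
  tsum_nonneg (fun r => by split; exacts [xst_nonneg f _ _, le_refl 0])

lemma dTanc_nonneg (hf : IsExcursion f) {a b : ℝ} (ha : 0 ≤ a) (hb : b ≤ 1) (hab : pre f a b) :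
    0 ≤ dTanc f a b := by
  rw [dTanc]; have := tsum_gx_le hf ha hb hab.1; linarith

lemma dTanc_le (hf : IsExcursion f) {a b : ℝ} (hab : a ≤ b) :
    dTanc f a b ≤ f b - infIcc f a b := by
  rw [dTanc]; have := tsum_gx_nonneg f a b; linarith

lemma dTanc_self (f : ℝ → ℝ) (a : ℝ) : dTanc f a a = 0 := by
  rw [dTanc, infIcc_self]
  have h : ∀ r : ℝ, (if pre f a r ∧ a < r ∧ pre f r a then xst f r a else 0) = 0 := by
    intro r; rw [if_neg]; rintro ⟨h1, h2, h3⟩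
    have := h3.1; linarith
  rw [tsum_congr h, tsum_zero]; ring

lemma dTanc_le_strict (hf : IsExcursion f) {a b : ℝ} (ha : 0 ≤ a) (hb : b ≤ 1) (hab : a < b)
    (hpre : pre f a b) : dTanc f a b ≤ lm f b - infIcc f a b := by
  rw [dTanc]
  have hb1 : b ∈ Icc (0:ℝ) 1 := ⟨ha.trans hab.le, hb⟩
  have hterm := Summable.le_tsum (summable_gx hf ha hb) b
    (fun j _ => by split; exacts [xst_nonneg f _ _, le_refl 0])
  rw [if_pos ⟨hpre, hab, pre_refl hf hb1⟩, xst_self hf hb1, jump] at hterm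
  linarith

lemma dO_nonneg (hf : IsExcursion f) {a b : ℝ} (ha : 0 ≤ a) (hb : b ≤ 1) : 0 ≤ dO f a b := by
  rw [dO]
  refine tsum_nonneg fun r => ?_
  by_cases h : pre f a r ∧ a < r ∧ pre f r b
  · rw [if_pos h]
    exact cdel_nonneg (le_refl 0) (xst_nonneg f r b) (hf.jump_nonneg r (C_mem ha hb h))
      (xst_le_jump hf h.2.2)
  · rw [if_neg h]

lemma dO_self (f : ℝ → ℝ) (a : ℝ) : dO f a a = 0 := by
  rw [dO]
  have h : ∀ r : ℝ, (if pre f a r ∧ a < r ∧ pre f r a then cdel f r 0 (xst f r a) else 0) = 0 := by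
    intro r; rw [if_neg]; rintro ⟨h1, h2, h3⟩
    have := h3.1; linarith
  rw [tsum_congr h, tsum_zero]

lemma dO_le_weak (hf : IsExcursion f) {a b : ℝ} (ha : 0 ≤ a) (hb : b ≤ 1) (hab : a ≤ b) :
    dO f a b ≤ f b - infIcc f a b := by
  rw [dO]
  refine le_trans (Summable.tsum_le_tsum ?_ (summable_gc hf ha hb) (summable_gx hf ha hb))
    (tsum_gx_le hf ha hb hab)
  intro r
  by_cases h : pre f a r ∧ a < r ∧ pre f r b
  · rw [if_pos h, if_pos h]; exact cdel_zero_right (xst_nonneg f r b)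
  · rw [if_neg h, if_neg h]

lemma dO_le (hf : IsExcursion f) {a b : ℝ} (ha : 0 ≤ a) (hb : b ≤ 1) (hab : a < b) :
    dO f a b ≤ lm f b - infIcc f a b := by
  rw [dO]
  have hsum2 : Summable (fun r => if (pre f a r ∧ a < r ∧ pre f r b) ∧ r < b
      then xst f r b else 0) := by
    refine Summable.of_norm_bounded (summable_gx hf ha hb) ?_
    intro r
    by_cases h : (pre f a r ∧ a < r ∧ pre f r b) ∧ r < b
    · rw [if_pos h, if_pos h.1, Real.norm_eq_abs, abs_of_nonneg (xst_nonneg f r b)]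
    · rw [if_neg h, norm_zero]
      by_cases h2 : pre f a r ∧ a < r ∧ pre f r b
      · rw [if_pos h2]; exact xst_nonneg f r b
      · rw [if_neg h2]
  refine le_trans (Summable.tsum_le_tsum ?_ (summable_gc hf ha hb) hsum2) ?_
  · intro r
    by_cases h : pre f a r ∧ a < r ∧ pre f r b
    · rw [if_pos h]
      rcases eq_or_lt_of_le h.2.2.1 with heq | hlt2
      · subst heq
        rw [if_neg (fun hh => lt_irrefl r hh.2), xst_self hf ⟨ha.trans h.2.1.le, hb⟩,
          cdel_zero_jump (hf.jump_nonneg r ⟨ha.trans h.2.1.le, hb⟩)]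
      · rw [if_pos ⟨h, hlt2⟩]
        exact cdel_zero_right (xst_nonneg f r b)
    · rw [if_neg h, if_neg (fun hh => h hh.1)]
  · exact Summable.tsum_le_of_sum_le hsum2 (fun u => by
      rw [← Finset.sum_filter]
      exact sum_xst_lt_le hf _ _ rfl ha hb hab (fun r hr => (Finset.mem_filter.1 hr).2))

lemma infIcc_pre_left (hf : IsExcursion f) {r b c : ℝ} (h0 : 0 ≤ r) (h1 : c ≤ 1) (hrb : r < b)
    (hbc : pre f b c) : infIcc f r c = infIcc f r b := by
  rw [infIcc_min hf hrb.le hbc.1]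
  exact min_eq_left (le_trans (infIcc_le_lm hf h0 hrb (hbc.1.trans h1)) hbc.2)

lemma xst_pre_left (hf : IsExcursion f) {r b c : ℝ} (h0 : 0 ≤ r) (h1 : c ≤ 1) (hrb : r < b)
    (hbc : pre f b c) : xst f r c = xst f r b := by
  rw [xst, xst, if_pos (hrb.le.trans hbc.1), if_pos hrb.le, infIcc_pre_left hf h0 h1 hrb hbc]

end Vern
namespace Vern

variable {f : ℝ → ℝ}

lemma split_pointwise_x (hf : IsExcursion f) {a b c : ℝ} (ha : 0 ≤ a) (h1 : c ≤ 1)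
    (hab : pre f a b) (hbc : pre f b c) (r : ℝ) :
    (if pre f a r ∧ a < r ∧ pre f r c then xst f r c else 0) =
    (if pre f a r ∧ a < r ∧ pre f r b then xst f r b else 0) +
    (if pre f b r ∧ b < r ∧ pre f r c then xst f r c else 0) +
    (if r = b ∧ a < b then xst f b c - xst f b b else 0) := by
  have hbI : b ∈ Icc (0:ℝ) 1 := ⟨ha.trans hab.1, hbc.1.trans h1⟩
  rcases lt_trichotomy r b with hr | heq | hr
  · rw [if_neg (show ¬(pre f b r ∧ b < r ∧ pre f r c) from fun h => absurd h.2.1 (not_lt.2 hr.le)),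
      if_neg (show ¬(r = b ∧ a < b) from fun h => (ne_of_lt hr) h.1)]
    by_cases h : pre f a r ∧ a < r ∧ pre f r b
    · rw [if_pos h, if_pos ⟨h.1, h.2.1, pre_trans hf (ha.trans h.2.1.le) h1 h.2.2 hbc⟩,
        xst_pre_left hf (ha.trans h.2.1.le) h1 hr hbc]
      ring
    · rw [if_neg h, if_neg (fun hC => h ⟨hC.1, hC.2.1, pre_chain hf h1 hC.2.2 hbc hr.le⟩)]
      ring
  · rw [heq]
    by_cases hab' : a < b
    · rw [if_pos ⟨hab, hab', hbc⟩, if_pos ⟨hab, hab', pre_refl hf hbI⟩,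
        if_neg (fun h => lt_irrefl b h.2.1), if_pos ⟨rfl, hab'⟩]
      ring
    · rw [if_neg (fun h => hab' h.2.1), if_neg (fun h => hab' h.2.1),
        if_neg (fun h => lt_irrefl b h.2.1), if_neg (fun h => hab' h.2)]
      ring
  · rw [if_neg (show ¬(r = b ∧ a < b) from fun h => (ne_of_gt hr) h.1),
      if_neg (show ¬(pre f a r ∧ a < r ∧ pre f r b) from fun h => absurd h.2.2.1 (not_le.2 hr))]
    by_cases h : pre f b r ∧ b < r ∧ pre f r c
    · rw [if_pos h,
        if_pos ⟨pre_trans hf ha (h.2.2.1.trans h1) hab h.1, hab.1.trans_lt h.2.1, h.2.2⟩]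
      ring
    · rw [if_neg h, if_neg (fun hC => h ⟨pre_chain hf h1 hbc hC.2.2 hr.le, hr, hC.2.2⟩)]
      ring

lemma split_pointwise_c (hf : IsExcursion f) {a b c : ℝ} (ha : 0 ≤ a) (h1 : c ≤ 1)
    (hab : pre f a b) (hbc : pre f b c) (r : ℝ) :
    (if pre f a r ∧ a < r ∧ pre f r c then cdel f r 0 (xst f r c) else 0) =
    (if pre f a r ∧ a < r ∧ pre f r b then cdel f r 0 (xst f r b) else 0) +
    (if pre f b r ∧ b < r ∧ pre f r c then cdel f r 0 (xst f r c) else 0) +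
    (if r = b ∧ a < b then cdel f b 0 (xst f b c) else 0) := by
  have hbI : b ∈ Icc (0:ℝ) 1 := ⟨ha.trans hab.1, hbc.1.trans h1⟩
  rcases lt_trichotomy r b with hr | heq | hr
  · rw [if_neg (show ¬(pre f b r ∧ b < r ∧ pre f r c) from fun h => absurd h.2.1 (not_lt.2 hr.le)),
      if_neg (show ¬(r = b ∧ a < b) from fun h => (ne_of_lt hr) h.1)]
    by_cases h : pre f a r ∧ a < r ∧ pre f r b
    · rw [if_pos h, if_pos ⟨h.1, h.2.1, pre_trans hf (ha.trans h.2.1.le) h1 h.2.2 hbc⟩,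
        xst_pre_left hf (ha.trans h.2.1.le) h1 hr hbc]
      ring
    · rw [if_neg h, if_neg (fun hC => h ⟨hC.1, hC.2.1, pre_chain hf h1 hC.2.2 hbc hr.le⟩)]
      ring
  · rw [heq]
    by_cases hab' : a < b
    · rw [if_pos ⟨hab, hab', hbc⟩, if_pos ⟨hab, hab', pre_refl hf hbI⟩,
        if_neg (fun h => lt_irrefl b h.2.1), if_pos ⟨rfl, hab'⟩,
        xst_self hf hbI, cdel_zero_jump (hf.jump_nonneg b hbI)]
      ring
    · rw [if_neg (fun h => hab' h.2.1), if_neg (fun h => hab' h.2.1),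
        if_neg (fun h => lt_irrefl b h.2.1), if_neg (fun h => hab' h.2)]
      ring
  · rw [if_neg (show ¬(r = b ∧ a < b) from fun h => (ne_of_gt hr) h.1),
      if_neg (show ¬(pre f a r ∧ a < r ∧ pre f r b) from fun h => absurd h.2.2.1 (not_le.2 hr))]
    by_cases h : pre f b r ∧ b < r ∧ pre f r c
    · rw [if_pos h,
        if_pos ⟨pre_trans hf ha (h.2.2.1.trans h1) hab h.1, hab.1.trans_lt h.2.1, h.2.2⟩]
      ring
    · rw [if_neg h, if_neg (fun hC => h ⟨pre_chain hf h1 hbc hC.2.2 hr.le, hr, hC.2.2⟩)]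
      ring

lemma dTanc_add (hf : IsExcursion f) {a b c : ℝ} (ha : 0 ≤ a) (h1 : c ≤ 1)
    (hab : pre f a b) (hbc : pre f b c) : dTanc f a c = dTanc f a b + dTanc f b c := by
  rcases eq_or_lt_of_le hab.1 with heq | hlt
  · rw [← heq] at hbc ⊢
    rw [dTanc_self]; ring
  · have hb1 : b ≤ 1 := hbc.1.trans h1
    have hbI : b ∈ Icc (0:ℝ) 1 := ⟨ha.trans hab.1, hb1⟩
    have hsum_ab := summable_gx hf ha hb1
    have hsum_bc := summable_gx hf (ha.trans hab.1) h1
    have hsing : Summable (fun r : ℝ => if r = b ∧ a < b then xst f b c - xst f b b else 0) :=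
      summable_of_ne_finset_zero (s := {b})
        (fun r hr => if_neg (fun h => hr (Finset.mem_singleton.2 h.1)))
    have ht3 : (∑' r : ℝ, if r = b ∧ a < b then xst f b c - xst f b b else 0)
        = xst f b c - xst f b b := by
      have he : ∀ r : ℝ, (if r = b ∧ a < b then xst f b c - xst f b b else 0)
          = (if r = b then xst f b c - xst f b b else 0) := fun r => by
        by_cases h : r = b
        · rw [if_pos ⟨h, hlt⟩, if_pos h]
        · rw [if_neg (fun hh => h hh.1), if_neg h]
      rw [tsum_congr he, tsum_ite_eq]
    simp only [dTanc]
    rw [tsum_congr (split_pointwise_x hf ha h1 hab hbc), Summable.tsum_add (hsum_ab.add hsum_bc) hsing,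
      Summable.tsum_add hsum_ab hsum_bc, ht3, xst_of_pre hbc, xst_self hf hbI,
      infIcc_pre_left hf ha h1 hlt hbc, jump]
    ring

lemma dO_add (hf : IsExcursion f) {a b c : ℝ} (ha : 0 ≤ a) (h1 : c ≤ 1)
    (hab : pre f a b) (hlt : a < b) (hbc : pre f b c) :
    dO f a c = dO f a b + cdel f b 0 (xst f b c) + dO f b c := by
  have hb1 : b ≤ 1 := hbc.1.trans h1
  have hsum_ab := summable_gc hf ha hb1
  have hsum_bc := summable_gc hf (ha.trans hab.1) h1
  have hsing : Summable (fun r : ℝ => if r = b ∧ a < b then cdel f b 0 (xst f b c) else 0) :=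
    summable_of_ne_finset_zero (s := {b})
      (fun r hr => if_neg (fun h => hr (Finset.mem_singleton.2 h.1)))
  have ht3 : (∑' r : ℝ, if r = b ∧ a < b then cdel f b 0 (xst f b c) else 0)
      = cdel f b 0 (xst f b c) := by
    have he : ∀ r : ℝ, (if r = b ∧ a < b then cdel f b 0 (xst f b c) else 0)
        = (if r = b then cdel f b 0 (xst f b c) else 0) := fun r => by
      by_cases h : r = b
      · rw [if_pos ⟨h, hlt⟩, if_pos h]
      · rw [if_neg (fun hh => h hh.1), if_neg h]
    rw [tsum_congr he, tsum_ite_eq]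
  simp only [dO]
  rw [tsum_congr (split_pointwise_c hf ha h1 hab hbc), Summable.tsum_add (hsum_ab.add hsum_bc) hsing,
    Summable.tsum_add hsum_ab hsum_bc, ht3]
  ring

lemma dT_self (hf : IsExcursion f) {s : ℝ} (hs : s ∈ Icc (0:ℝ) 1) : dT f s s = 0 := by
  rw [dT, mrca_self hf hs, dTanc_self]; ring

lemma dT_symm (f : ℝ → ℝ) (s t : ℝ) : dT f s t = dT f t s := by
  rw [dT, dT, mrca_comm f s t, add_comm]

lemma dT_nonneg (hf : IsExcursion f) {s t : ℝ} (hs : s ∈ Icc (0:ℝ) 1) (ht : t ∈ Icc (0:ℝ) 1) :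
    0 ≤ dT f s t := by
  obtain ⟨h0, h1, h2⟩ := mrca_spec hf hs ht
  exact add_nonneg (dTanc_nonneg hf h0 hs.2 h1) (dTanc_nonneg hf h0 ht.2 h2)

lemma dL_self (hf : IsExcursion f) {s : ℝ} (hs : s ∈ Icc (0:ℝ) 1) : dL f s s = 0 := by
  rw [dL, mrca_self hf hs, dO_self, cdel_self (hf.jump_nonneg s hs)]; ring

lemma dL_symm (f : ℝ → ℝ) (s t : ℝ) : dL f s t = dL f t s := by
  rw [dL, dL, mrca_comm f s t, cdel_comm]; ring

lemma dL_nonneg (hf : IsExcursion f) {s t : ℝ} (hs : s ∈ Icc (0:ℝ) 1) (ht : t ∈ Icc (0:ℝ) 1) :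
    0 ≤ dL f s t := by
  obtain ⟨h0, h1, h2⟩ := mrca_spec hf hs ht
  have hmI : mrca f s t ∈ Icc (0:ℝ) 1 := ⟨h0, h1.1.trans hs.2⟩
  refine add_nonneg (add_nonneg ?_ (dO_nonneg hf h0 hs.2)) (dO_nonneg hf h0 ht.2)
  exact cdel_nonneg (xst_nonneg f _ _) (xst_nonneg f _ _) (xst_le_jump hf h1) (xst_le_jump hf h2)

lemma mrca3 (hf : IsExcursion f) {s t u : ℝ} (hs : s ∈ Icc (0:ℝ) 1) (ht : t ∈ Icc (0:ℝ) 1)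
    (hu : u ∈ Icc (0:ℝ) 1) (h12 : mrca f s t ≤ mrca f t u) :
    (mrca f s u = mrca f s t ∧ pre f (mrca f s t) (mrca f t u)) ∨
    (mrca f t u = mrca f s t ∧ pre f (mrca f s t) (mrca f s u) ∧ mrca f s t ≤ mrca f s u) := by
  obtain ⟨h10, h1s, h1t⟩ := mrca_spec hf hs ht
  obtain ⟨h20, h2t, h2u⟩ := mrca_spec hf ht hu
  obtain ⟨h30, h3s, h3u⟩ := mrca_spec hf hs hu
  have hp12 : pre f (mrca f s t) (mrca f t u) := pre_chain hf ht.2 h1t h2t h12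
  have h1u : pre f (mrca f s t) u := pre_trans hf h10 hu.2 hp12 h2u
  have h13 : mrca f s t ≤ mrca f s u := mrca_ge hf h10 h1s h1u
  rcases le_or_gt (mrca f s u) (mrca f t u) with h32 | h23
  · left
    have hp32 : pre f (mrca f s u) (mrca f t u) := pre_chain hf hu.2 h3u h2u h32
    have h3t : pre f (mrca f s u) t := pre_trans hf h30 ht.2 hp32 h2t
    have h31 : mrca f s u ≤ mrca f s t := mrca_ge hf h30 h3s h3t
    exact ⟨le_antisymm h31 h13, hp12⟩
  · right
    have hp23 : pre f (mrca f t u) (mrca f s u) := pre_chain hf hu.2 h2u h3u h23.le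
    have h2s : pre f (mrca f t u) s := pre_trans hf h20 hs.2 hp23 h3s
    have h21 : mrca f t u ≤ mrca f s t := mrca_ge hf h20 h2s h2t
    have heq : mrca f t u = mrca f s t := le_antisymm h21 h12
    rw [heq] at hp23 h23
    exact ⟨heq, hp23, h23.le⟩

lemma dT_triangle_aux (hf : IsExcursion f) {s t u : ℝ} (hs : s ∈ Icc (0:ℝ) 1)
    (ht : t ∈ Icc (0:ℝ) 1) (hu : u ∈ Icc (0:ℝ) 1) (h12 : mrca f s t ≤ mrca f t u) :
    dT f s u ≤ dT f s t + dT f t u := by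
  obtain ⟨h10, h1s, h1t⟩ := mrca_spec hf hs ht
  obtain ⟨h20, h2t, h2u⟩ := mrca_spec hf ht hu
  obtain ⟨h30, h3s, h3u⟩ := mrca_spec hf hs hu
  rcases mrca3 hf hs ht hu h12 with ⟨heq, hp12⟩ | ⟨heq, hp13, h13'⟩
  · simp only [dT]
    rw [heq]
    have e1 := dTanc_add hf h10 hu.2 hp12 h2u
    have e2 := dTanc_add hf h10 ht.2 hp12 h2t
    have hn : 0 ≤ dTanc f (mrca f t u) t := dTanc_nonneg hf h20 ht.2 h2t
    linarith
  · simp only [dT]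
    rw [heq]
    have e1 := dTanc_add hf h10 hs.2 hp13 h3s
    have e2 := dTanc_add hf h10 hu.2 hp13 h3u
    have hn1 : 0 ≤ dTanc f (mrca f s t) t := dTanc_nonneg hf h10 ht.2 h1t
    have hn2 : 0 ≤ dTanc f (mrca f s t) (mrca f s u) :=
      dTanc_nonneg hf h10 (h3s.1.trans hs.2) hp13
    linarith

lemma dT_triangle (hf : IsExcursion f) {s t u : ℝ} (hs : s ∈ Icc (0:ℝ) 1)
    (ht : t ∈ Icc (0:ℝ) 1) (hu : u ∈ Icc (0:ℝ) 1) : dT f s u ≤ dT f s t + dT f t u := by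
  rcases le_total (mrca f s t) (mrca f t u) with h | h
  · exact dT_triangle_aux hf hs ht hu h
  · have h2 := dT_triangle_aux hf hu ht hs (by rwa [mrca_comm f u t, mrca_comm f t s])
    rw [dT_symm f u s, dT_symm f u t, dT_symm f t s] at h2
    linarith

lemma dL_triangle_aux (hf : IsExcursion f) {s t u : ℝ} (hs : s ∈ Icc (0:ℝ) 1)
    (ht : t ∈ Icc (0:ℝ) 1) (hu : u ∈ Icc (0:ℝ) 1) (h12 : mrca f s t ≤ mrca f t u) :
    dL f s u ≤ dL f s t + dL f t u := by
  obtain ⟨h10, h1s, h1t⟩ := mrca_spec hf hs ht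
  obtain ⟨h20, h2t, h2u⟩ := mrca_spec hf ht hu
  obtain ⟨h30, h3s, h3u⟩ := mrca_spec hf hs hu
  have hm1I : mrca f s t ∈ Icc (0:ℝ) 1 := ⟨h10, h1s.1.trans hs.2⟩
  have hm2I : mrca f t u ∈ Icc (0:ℝ) 1 := ⟨h20, h2t.1.trans ht.2⟩
  have hm3I : mrca f s u ∈ Icc (0:ℝ) 1 := ⟨h30, h3s.1.trans hs.2⟩
  rcases mrca3 hf hs ht hu h12 with ⟨heq, hp12⟩ | ⟨heq, hp13, h13'⟩
  · rcases eq_or_lt_of_le h12 with heq2 | hlt2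
    · rw [← heq2] at h2t h2u
      simp only [dL]
      rw [heq, ← heq2]
      have hc := cdel_triangle (w := mrca f s t)
        ⟨xst_nonneg f _ _, xst_le_jump hf h1s⟩ ⟨xst_nonneg f _ _, xst_le_jump hf h2t⟩
        ⟨xst_nonneg f _ _, xst_le_jump hf h2u⟩
      have hdO : 0 ≤ dO f (mrca f s t) t := dO_nonneg hf h10 ht.2
      linarith
    · simp only [dL]
      rw [heq]
      have hxu : xst f (mrca f s t) u = xst f (mrca f s t) t := by
        rw [xst_pre_left hf h10 hu.2 hlt2 h2u, xst_pre_left hf h10 ht.2 hlt2 h2t]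
      have e1 := dO_add hf h10 hu.2 hp12 hlt2 h2u
      have e2 := dO_add hf h10 ht.2 hp12 hlt2 h2t
      have hc : cdel f (mrca f t u) 0 (xst f (mrca f t u) u) ≤
          cdel f (mrca f t u) 0 (xst f (mrca f t u) t) +
          cdel f (mrca f t u) (xst f (mrca f t u) t) (xst f (mrca f t u) u) :=
        cdel_triangle ⟨le_refl 0, hf.jump_nonneg _ hm2I⟩
          ⟨xst_nonneg f _ _, xst_le_jump hf h2t⟩ ⟨xst_nonneg f _ _, xst_le_jump hf h2u⟩
      have hdO : 0 ≤ dO f (mrca f t u) t := dO_nonneg hf h20 ht.2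
      rw [hxu]
      linarith
  · rw [heq] at h2t h2u
    rcases eq_or_lt_of_le h13' with heq3 | hlt3
    · rw [← heq3] at h3s h3u
      simp only [dL]
      rw [heq, ← heq3]
      have hc := cdel_triangle (w := mrca f s t)
        ⟨xst_nonneg f _ _, xst_le_jump hf h3s⟩ ⟨xst_nonneg f _ _, xst_le_jump hf h1t⟩
        ⟨xst_nonneg f _ _, xst_le_jump hf h3u⟩
      have hdO : 0 ≤ dO f (mrca f s t) t := dO_nonneg hf h10 ht.2
      linarith
    · simp only [dL]
      rw [heq]
      have e1 := dO_add hf h10 hs.2 hp13 hlt3 h3s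
      have e2 := dO_add hf h10 hu.2 hp13 hlt3 h3u
      have hc : cdel f (mrca f s u) (xst f (mrca f s u) s) (xst f (mrca f s u) u) ≤
          cdel f (mrca f s u) (xst f (mrca f s u) s) 0 +
          cdel f (mrca f s u) 0 (xst f (mrca f s u) u) :=
        cdel_triangle ⟨xst_nonneg f _ _, xst_le_jump hf h3s⟩
          ⟨le_refl 0, hf.jump_nonneg _ hm3I⟩ ⟨xst_nonneg f _ _, xst_le_jump hf h3u⟩
      have hcomm : cdel f (mrca f s u) (xst f (mrca f s u) s) 0 =
          cdel f (mrca f s u) 0 (xst f (mrca f s u) s) := cdel_comm f _ _ _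
      have hc1 : 0 ≤ cdel f (mrca f s t) (xst f (mrca f s t) s) (xst f (mrca f s t) t) :=
        cdel_nonneg (xst_nonneg f _ _) (xst_nonneg f _ _) (xst_le_jump hf h1s)
          (xst_le_jump hf h1t)
      have hc2 : 0 ≤ cdel f (mrca f s t) (xst f (mrca f s t) t) (xst f (mrca f s t) u) :=
        cdel_nonneg (xst_nonneg f _ _) (xst_nonneg f _ _) (xst_le_jump hf h2t)
          (xst_le_jump hf h2u)
      have hdOt : 0 ≤ dO f (mrca f s t) t := dO_nonneg hf h10 ht.2
      have hdOm : 0 ≤ dO f (mrca f s t) (mrca f s u) := dO_nonneg hf h10 hm3I.2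
      linarith

lemma dL_triangle (hf : IsExcursion f) {s t u : ℝ} (hs : s ∈ Icc (0:ℝ) 1)
    (ht : t ∈ Icc (0:ℝ) 1) (hu : u ∈ Icc (0:ℝ) 1) : dL f s u ≤ dL f s t + dL f t u := by
  rcases le_total (mrca f s t) (mrca f t u) with h | h
  · exact dL_triangle_aux hf hs ht hu h
  · have h2 := dL_triangle_aux hf hu ht hs (by rwa [mrca_comm f u t, mrca_comm f t s])
    rw [dL_symm f u s, dL_symm f u t, dL_symm f t s] at h2
    linarith

lemma dV_self (hf : IsExcursion f) {s : ℝ} (hs : s ∈ Icc (0:ℝ) 1) : dV f s s = 0 := by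
  rw [dV, dT_self hf hs, dL_self hf hs]; ring

lemma dV_symm (f : ℝ → ℝ) (s t : ℝ) : dV f s t = dV f t s := by
  rw [dV, dV, dT_symm f s t, dL_symm f s t]

lemma dV_triangle (hf : IsExcursion f) {s t u : ℝ} (hs : s ∈ Icc (0:ℝ) 1)
    (ht : t ∈ Icc (0:ℝ) 1) (hu : u ∈ Icc (0:ℝ) 1) : dV f s u ≤ dV f s t + dV f t u := by
  have h1 := dT_triangle hf hs ht hu
  have h2 := dL_triangle hf hs ht hu
  simp only [dV]; linarith

end Vern
namespace Vern

variable {f : ℝ → ℝ}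

lemma key_inf (hf : IsExcursion f) {s t : ℝ} (hs : s ∈ Icc (0:ℝ) 1) (ht : t ∈ Icc (0:ℝ) 1)
    (hst : s ≤ t) : infIcc f s t ≤ infIcc f (mrca f s t) s := by
  obtain ⟨h0, hms, hmt⟩ := mrca_spec hf hs ht
  set m := mrca f s t with hm
  set c := infIcc f s t with hc
  rcases eq_or_lt_of_le hms.1 with heq | hmlt
  · rw [heq, infIcc_self]
    exact infIcc_le hf ⟨le_refl s, hst⟩
  · by_contra hcon
    push_neg at hcon
    set W := {v : ℝ | v ∈ Icc m s ∧ (f v < c ∨ lm f v < c)} with hWdef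
    obtain ⟨y, hy, hylt⟩ : ∃ y ∈ f '' Icc m s, y < c :=
      exists_lt_of_csInf_lt ((nonempty_Icc.2 hms.1).image f) hcon
    obtain ⟨v0, hv0, rfl⟩ := hy
    have hv0W : v0 ∈ W := ⟨hv0, Or.inl hylt⟩
    have hbdd : BddAbove W := ⟨s, fun v hv => hv.1.2⟩
    set w := sSup W with hwdef
    have hwm : m ≤ w := le_trans hv0.1 (le_csSup hbdd hv0W)
    have hws : w ≤ s := csSup_le ⟨v0, hv0W⟩ (fun v hv => hv.1.2)
    have hwI : w ∈ Icc (0:ℝ) 1 := ⟨h0.trans hwm, hws.trans hs.2⟩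
    have hni : ∀ v, w < v → v ≤ s → c ≤ f v ∧ c ≤ lm f v := by
      intro v hv hvs
      by_contra hcc
      rw [not_and_or, not_le, not_le] at hcc
      have hvW : v ∈ W := ⟨⟨hwm.trans hv.le, hvs⟩, hcc⟩
      exact absurd (le_csSup hbdd hvW) (not_le.2 hv)
    have hlmw : lm f w ≤ c := by
      rcases eq_or_lt_of_le (h0.trans hwm) with hw0 | hw0
      · rw [lm, if_pos hw0.symm]; exact infIcc_nonneg hf s t
      · by_cases hwW : w ∈ W
        · rcases hwW.2 with h | h
          · exact le_trans (lm_le_self hf hwI) h.le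
          · exact h.le
        · rw [lm, if_neg (ne_of_gt hw0)]
          by_contra hcon2
          push_neg at hcon2
          set L := Function.leftLim f w with hLdef
          have hten := hf.leftLimEx w ⟨hw0, hwI.2⟩
          have hU : ∀ᶠ v in 𝓝[<] w, |f v - L| < (L - c) / 2 := by
            simpa [Real.dist_eq] using Metric.tendsto_nhds.1 hten ((L - c)/2) (by linarith)
          obtain ⟨l, hl, hIoo⟩ := mem_nhdsLT_iff_exists_Ioo_subset.1 hU
          obtain ⟨v1, hv1W, hv1gt⟩ := exists_lt_of_lt_csSup ⟨v0, hv0W⟩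
            (show max l 0 < w from max_lt hl hw0)
          have hv1w : v1 < w := lt_of_le_of_ne (le_csSup hbdd hv1W) (fun h => hwW (h ▸ hv1W))
          rcases hv1W.2 with hfv | hlv
          · have h3 := hIoo ⟨lt_of_le_of_lt (le_max_left l 0) hv1gt, hv1w⟩
            rw [mem_setOf_eq] at h3
            linarith [(abs_sub_lt_iff.1 h3).2]
          · have hv10 : 0 < v1 := lt_of_le_of_lt (le_max_right l 0) hv1gt
            have hten1 := hf.leftLimEx v1 ⟨hv10, (hv1w.le.trans hws).trans hs.2⟩
            rw [lm, if_neg (ne_of_gt hv10)] at hlv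
            have hU1 : ∀ᶠ v in 𝓝[<] v1, |f v - Function.leftLim f v1| < (L - c) / 2 := by
              simpa [Real.dist_eq] using Metric.tendsto_nhds.1 hten1 ((L - c)/2) (by linarith)
            have hl1 : l < v1 := lt_of_le_of_lt (le_max_left l 0) hv1gt
            obtain ⟨v2, hv2a, hv2b⟩ :=
              (hU1.and (Ioo_mem_nhdsLT_of_mem (⟨hl1, le_refl v1⟩ : v1 ∈ Ioc l v1))).exists
            have h3 := hIoo ⟨hv2b.1, hv2b.2.trans hv1w⟩
            rw [mem_setOf_eq] at h3
            linarith [(abs_sub_lt_iff.1 h3).2, (abs_sub_lt_iff.1 hv2a).1]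
    have hwge : ∀ v ∈ Icc w t, lm f w ≤ f v := by
      intro v hv
      rcases eq_or_lt_of_le hv.1 with hveq | hvgt
      · rw [← hveq]; exact lm_le_self hf hwI
      · rcases le_or_gt v s with hvs | hvs
        · exact le_trans hlmw (hni v hvgt hvs).1
        · exact le_trans hlmw (infIcc_le hf ⟨hvs.le, hv.2⟩)
    have hpws : pre f w s := ⟨hws, le_infIcc hws (fun v hv => hwge v ⟨hv.1, hv.2.trans hst⟩)⟩
    have hpwt : pre f w t := ⟨hws.trans hst, le_infIcc (hws.trans hst) hwge⟩
    have hwlem : w ≤ m := mrca_ge hf (h0.trans hwm) hpws hpwt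
    have hwem : w = m := le_antisymm hwlem hwm
    have hv0m : v0 = m := by
      have h1 : v0 ≤ w := le_csSup hbdd hv0W
      rw [hwem] at h1
      exact le_antisymm h1 hv0.1
    have hrc := hf.rightCont m ⟨h0, lt_of_lt_of_le hmlt hs.2⟩
    have hev : ∀ᶠ v in 𝓝[>] m, c ≤ f v := by
      filter_upwards [Ioo_mem_nhdsGT_of_mem (⟨le_refl m, hmlt⟩ : m ∈ Ico m s)] with v hv
      have hwv : w < v := by rw [hwem]; exact hv.1
      exact (hni v hwv hv.2.le).1
    have hcm : c ≤ f m := ge_of_tendsto hrc hev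
    rw [hv0m] at hylt
    linarith

lemma dL_bound (hf : IsExcursion f) {s t : ℝ} (hs : s ∈ Icc (0:ℝ) 1) (ht : t ∈ Icc (0:ℝ) 1)
    (hst : s < t) : dL f s t ≤ f s + lm f t - 2 * infIcc f s t := by
  rw [dL]
  obtain ⟨h0, hms, hmt⟩ := mrca_spec hf hs ht
  set m := mrca f s t with hm
  have hmlt : m < t := lt_of_le_of_lt hms.1 hst
  have hxs : xst f m s = infIcc f m s - lm f m := xst_of_pre hms
  have hxt : xst f m t = infIcc f m t - lm f m := xst_of_pre hmt
  have hmono : infIcc f m t ≤ infIcc f m s := infIcc_anti hf (le_refl m) hst.le hms.1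
  have hcd : cdel f m (xst f m s) (xst f m t) ≤ infIcc f m s - infIcc f m t := by
    refine le_trans (min_le_left _ _) ?_
    rw [hxs, hxt, abs_of_nonneg (by linarith)]
    linarith
  have hdos : dO f m s ≤ f s - infIcc f m s := dO_le_weak hf h0 hs.2 hms.1
  have hdot : dO f m t ≤ lm f t - infIcc f m t := dO_le hf h0 ht.2 hmlt
  have hkey : infIcc f s t ≤ infIcc f m s := key_inf hf hs ht hst.le
  have hmin : infIcc f m t = infIcc f s t := by
    rw [infIcc_min hf hms.1 hst.le, min_eq_right hkey]
  linarith

lemma dT_bound (hf : IsExcursion f) {s t : ℝ} (hs : s ∈ Icc (0:ℝ) 1) (ht : t ∈ Icc (0:ℝ) 1)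
    (hst : s < t) : dT f s t ≤ f s + lm f t - 2 * infIcc f s t := by
  rw [dT]
  obtain ⟨h0, hms, hmt⟩ := mrca_spec hf hs ht
  set m := mrca f s t with hm
  have hmlt : m < t := lt_of_le_of_lt hms.1 hst
  have h1 : dTanc f m s ≤ f s - infIcc f m s := dTanc_le hf hms.1
  have h2 : dTanc f m t ≤ lm f t - infIcc f m t := dTanc_le_strict hf h0 ht.2 hmlt hmt
  have hkey : infIcc f s t ≤ infIcc f m s := key_inf hf hs ht hst.le
  have hmin : infIcc f m t = infIcc f s t := by
    rw [infIcc_min hf hms.1 hst.le, min_eq_right hkey]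
  linarith

lemma diag_est (hf : IsExcursion f) {s₀ : ℝ} (hs₀ : s₀ ∈ Icc (0:ℝ) 1) {ε : ℝ} (hε : 0 < ε) :
    ∃ δ > 0, ∀ t ∈ Icc (0:ℝ) 1, |t - s₀| < δ →
      ((s₀ < t → f s₀ + lm f t - 2 * infIcc f s₀ t < ε) ∧
       (t < s₀ → f t + lm f s₀ - 2 * infIcc f t s₀ < ε)) := by
  have hright : ∃ δ > 0, ∀ t ∈ Icc (0:ℝ) 1, s₀ < t → t - s₀ < δ →
      f s₀ + lm f t - 2 * infIcc f s₀ t < ε := by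
    rcases eq_or_lt_of_le hs₀.2 with h1 | h1
    · exact ⟨1, one_pos, fun t ht hlt _ => absurd ht.2 (not_le.2 (h1 ▸ hlt))⟩
    · have hrc := hf.rightCont s₀ ⟨hs₀.1, h1⟩
      have hU : ∀ᶠ v in 𝓝[>] s₀, |f v - f s₀| < ε / 4 := by
        simpa [Real.dist_eq] using Metric.tendsto_nhds.1 hrc (ε/4) (by linarith)
      obtain ⟨l, hl, hIoo⟩ := mem_nhdsGT_iff_exists_Ioo_subset.1 hU
      refine ⟨l - s₀, by simpa using hl, fun t ht hst hdelta => ?_⟩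
      have htl : t < l := by linarith
      have hlm : lm f t ≤ f s₀ + ε / 4 := by
        rw [lm, if_neg (ne_of_gt (lt_of_le_of_lt hs₀.1 hst))]
        refine le_of_tendsto (hf.leftLimEx t ⟨lt_of_le_of_lt hs₀.1 hst, ht.2⟩) ?_
        filter_upwards [Ioo_mem_nhdsLT_of_mem (⟨hst, le_refl t⟩ : t ∈ Ioc s₀ t)] with v hv
        have h3 := hIoo ⟨hv.1, hv.2.trans htl⟩
        rw [mem_setOf_eq] at h3
        linarith [(abs_sub_lt_iff.1 h3).1]
      have hinf : f s₀ - ε / 4 ≤ infIcc f s₀ t := by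
        refine le_infIcc hst.le fun v hv => ?_
        rcases eq_or_lt_of_le hv.1 with hveq | hvgt
        · rw [← hveq]; linarith
        · have h3 := hIoo ⟨hvgt, lt_of_le_of_lt hv.2 htl⟩
          rw [mem_setOf_eq] at h3
          linarith [(abs_sub_lt_iff.1 h3).2]
      linarith
  have hleft : ∃ δ > 0, ∀ t ∈ Icc (0:ℝ) 1, t < s₀ → s₀ - t < δ →
      f t + lm f s₀ - 2 * infIcc f t s₀ < ε := by
    rcases eq_or_lt_of_le hs₀.1 with h1 | h1
    · exact ⟨1, one_pos, fun t ht hlt _ => absurd (h1 ▸ hlt) (not_lt.2 ht.1)⟩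
    · have hL := hf.leftLimEx s₀ ⟨h1, hs₀.2⟩
      have hlm0 : lm f s₀ = Function.leftLim f s₀ := by rw [lm, if_neg (ne_of_gt h1)]
      have hU : ∀ᶠ v in 𝓝[<] s₀, |f v - Function.leftLim f s₀| < ε / 4 := by
        simpa [Real.dist_eq] using Metric.tendsto_nhds.1 hL (ε/4) (by linarith)
      obtain ⟨l, hl, hIoo⟩ := mem_nhdsLT_iff_exists_Ioo_subset.1 hU
      refine ⟨s₀ - l, by simpa using hl, fun t ht hts hdelta => ?_⟩
      have hlt2 : l < t := by linarith
      have hft : f t ≤ Function.leftLim f s₀ + ε / 4 := by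
        have h3 := hIoo ⟨hlt2, hts⟩
        rw [mem_setOf_eq] at h3
        linarith [(abs_sub_lt_iff.1 h3).1]
      have hinf : Function.leftLim f s₀ - ε / 4 ≤ infIcc f t s₀ := by
        refine le_infIcc hts.le fun v hv => ?_
        rcases eq_or_lt_of_le hv.2 with hveq | hvlt
        · rw [hveq]
          have h4 := lm_le_self hf hs₀
          rw [hlm0] at h4
          linarith
        · have h3 := hIoo ⟨lt_of_lt_of_le hlt2 hv.1, hvlt⟩
          rw [mem_setOf_eq] at h3
          linarith [(abs_sub_lt_iff.1 h3).2]
      rw [hlm0]; linarith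
  obtain ⟨δ1, hδ1, H1⟩ := hright
  obtain ⟨δ2, hδ2, H2⟩ := hleft
  refine ⟨min δ1 δ2, lt_min hδ1 hδ2, fun t ht habs => ⟨fun h => H1 t ht h ?_, fun h => H2 t ht h ?_⟩⟩
  · have h1 : t - s₀ ≤ |t - s₀| := le_abs_self _
    have h2 : min δ1 δ2 ≤ δ1 := min_le_left _ _
    linarith
  · have h1 : s₀ - t ≤ |t - s₀| := by rw [abs_sub_comm]; exact le_abs_self _
    have h2 : min δ1 δ2 ≤ δ2 := min_le_right _ _
    linarith

lemma dL_diag (hf : IsExcursion f) {s₀ : ℝ} (hs₀ : s₀ ∈ Icc (0:ℝ) 1) {ε : ℝ} (hε : 0 < ε) :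
    ∃ δ > 0, ∀ t ∈ Icc (0:ℝ) 1, |t - s₀| < δ → dL f s₀ t < ε := by
  obtain ⟨δ, hδ, H⟩ := diag_est hf hs₀ hε
  refine ⟨δ, hδ, fun t ht habs => ?_⟩
  rcases lt_trichotomy s₀ t with h | h | h
  · exact lt_of_le_of_lt (dL_bound hf hs₀ ht h) ((H t ht habs).1 h)
  · rw [← h, dL_self hf hs₀]; exact hε
  · rw [dL_symm f s₀ t]
    exact lt_of_le_of_lt (dL_bound hf ht hs₀ h) ((H t ht habs).2 h)

lemma dT_diag (hf : IsExcursion f) {s₀ : ℝ} (hs₀ : s₀ ∈ Icc (0:ℝ) 1) {ε : ℝ} (hε : 0 < ε) :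
    ∃ δ > 0, ∀ t ∈ Icc (0:ℝ) 1, |t - s₀| < δ → dT f s₀ t < ε := by
  obtain ⟨δ, hδ, H⟩ := diag_est hf hs₀ hε
  refine ⟨δ, hδ, fun t ht habs => ?_⟩
  rcases lt_trichotomy s₀ t with h | h | h
  · exact lt_of_le_of_lt (dT_bound hf hs₀ ht h) ((H t ht habs).1 h)
  · rw [← h, dT_self hf hs₀]; exact hε
  · rw [dT_symm f s₀ t]
    exact lt_of_le_of_lt (dT_bound hf ht hs₀ h) ((H t ht habs).2 h)

lemma dV_diag (hf : IsExcursion f) {s₀ : ℝ} (hs₀ : s₀ ∈ Icc (0:ℝ) 1) {ε : ℝ} (hε : 0 < ε) :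
    ∃ δ > 0, ∀ t ∈ Icc (0:ℝ) 1, |t - s₀| < δ → dV f s₀ t < ε := by
  obtain ⟨δ1, hδ1, H1⟩ := dL_diag hf hs₀ (show (0:ℝ) < ε/3 by linarith)
  obtain ⟨δ2, hδ2, H2⟩ := dT_diag hf hs₀ (show (0:ℝ) < ε/3 by linarith)
  refine ⟨min δ1 δ2, lt_min hδ1 hδ2, fun t ht habs => ?_⟩
  have e1 := H1 t ht (lt_of_lt_of_le habs (min_le_left _ _))
  have e2 := H2 t ht (lt_of_lt_of_le habs (min_le_right _ _))
  rw [dV]; linarith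

end Vern
namespace Vern

/-- Wrapper type for `[0,1]` carrying a custom pseudometric. -/
structure Pt (D : ℝ → ℝ → ℝ) : Type where
  val : Icc (0:ℝ) 1

noncomputable def ptPseudo (D : ℝ → ℝ → ℝ)
    (hself : ∀ s ∈ Icc (0:ℝ) 1, D s s = 0)
    (hsymm : ∀ s t : ℝ, D s t = D t s)
    (htri : ∀ s ∈ Icc (0:ℝ) 1, ∀ t ∈ Icc (0:ℝ) 1, ∀ u ∈ Icc (0:ℝ) 1,
      D s u ≤ D s t + D t u) :
    PseudoMetricSpace (Pt D) where
  dist s t := D s.val.1 t.val.1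
  dist_self s := hself s.val.1 s.val.2
  dist_comm s t := hsymm _ _
  dist_triangle x y z := htri x.val.1 x.val.2 y.val.1 y.val.2 z.val.1 z.val.2

lemma contOn_of_diag (D : ℝ → ℝ → ℝ)
    (hsymm : ∀ s t : ℝ, D s t = D t s)
    (htri : ∀ s ∈ Icc (0:ℝ) 1, ∀ t ∈ Icc (0:ℝ) 1, ∀ u ∈ Icc (0:ℝ) 1,
      D s u ≤ D s t + D t u)
    (hdiag : ∀ s₀ ∈ Icc (0:ℝ) 1, ∀ ε : ℝ, 0 < ε →
      ∃ δ > 0, ∀ t ∈ Icc (0:ℝ) 1, |t - s₀| < δ → D s₀ t < ε) :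
    ContinuousOn (fun p : ℝ × ℝ => D p.1 p.2) (Icc (0:ℝ) 1 ×ˢ Icc (0:ℝ) 1) := by
  have hfour : ∀ s ∈ Icc (0:ℝ) 1, ∀ t ∈ Icc (0:ℝ) 1, ∀ s' ∈ Icc (0:ℝ) 1, ∀ t' ∈ Icc (0:ℝ) 1,
      |D s' t' - D s t| ≤ D s s' + D t t' := by
    intro s hs t ht s' hs' t' ht'
    have h1 : D s' t' ≤ D s' s + D s t' := htri s' hs' s hs t' ht'
    have h2 : D s t' ≤ D s t + D t t' := htri s hs t ht t' ht'
    have h3 : D s t ≤ D s s' + D s' t := htri s hs s' hs' t ht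
    have h4 : D s' t ≤ D s' t' + D t' t := htri s' hs' t' ht' t ht
    have h5 : D s' s = D s s' := hsymm s' s
    have h6 : D t' t = D t t' := hsymm t' t
    rw [abs_le]
    constructor <;> linarith
  intro p hp
  rw [ContinuousWithinAt, Metric.tendsto_nhdsWithin_nhds]
  intro ε hε
  obtain ⟨δ1, hδ1, H1⟩ := hdiag p.1 hp.1 (ε/3) (by linarith)
  obtain ⟨δ2, hδ2, H2⟩ := hdiag p.2 hp.2 (ε/3) (by linarith)
  refine ⟨min δ1 δ2, lt_min hδ1 hδ2, fun q hq hdist => ?_⟩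
  rw [Prod.dist_eq, Real.dist_eq, Real.dist_eq] at hdist
  have hd1 : |q.1 - p.1| < δ1 :=
    lt_of_le_of_lt (le_max_left _ _) (lt_of_lt_of_le hdist (min_le_left _ _))
  have hd2 : |q.2 - p.2| < δ2 :=
    lt_of_le_of_lt (le_max_right _ _) (lt_of_lt_of_le hdist (min_le_right _ _))
  have e1 := H1 q.1 hq.1 hd1
  have e2 := H2 q.2 hq.2 hd2
  rw [Real.dist_eq]
  exact lt_of_le_of_lt (hfour p.1 hp.1 p.2 hp.2 q.1 hq.1 q.2 hq.2) (by linarith)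

lemma quotient_exists (D : ℝ → ℝ → ℝ)
    (hself : ∀ s ∈ Icc (0:ℝ) 1, D s s = 0)
    (hsymm : ∀ s t : ℝ, D s t = D t s)
    (htri : ∀ s ∈ Icc (0:ℝ) 1, ∀ t ∈ Icc (0:ℝ) 1, ∀ u ∈ Icc (0:ℝ) 1,
      D s u ≤ D s t + D t u)
    (hdiag : ∀ s₀ ∈ Icc (0:ℝ) 1, ∀ ε : ℝ, 0 < ε →
      ∃ δ > 0, ∀ t ∈ Icc (0:ℝ) 1, |t - s₀| < δ → D s₀ t < ε) :
    ∃ (X : Type) (m : MetricSpace X) (q : Icc (0:ℝ) 1 → X), CompactSpace X ∧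
      Function.Surjective q ∧ ∀ s t : Icc (0:ℝ) 1, dist (q s) (q t) = D s.1 t.1 := by
  letI : PseudoMetricSpace (Pt D) := ptPseudo D hself hsymm htri
  have hsurj0 : Function.Surjective (fun s : Icc (0:ℝ) 1 => (Pt.mk s : Pt D)) :=
    fun p => ⟨p.val, rfl⟩
  have hcont : Continuous (fun s : Icc (0:ℝ) 1 => (Pt.mk s : Pt D)) := by
    rw [Metric.continuous_iff]
    intro b ε hε
    obtain ⟨δ, hδ, H⟩ := hdiag b.1 b.2 ε hε
    refine ⟨δ, hδ, fun a ha => ?_⟩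
    rw [Subtype.dist_eq, Real.dist_eq] at ha
    have hd : dist (Pt.mk a : Pt D) (Pt.mk b) = D a.1 b.1 := rfl
    rw [hd, hsymm]
    exact H a.1 a.2 ha
  haveI : CompactSpace (Pt D) :=
    ⟨by rw [← hsurj0.range_eq]; exact isCompact_range hcont⟩
  refine ⟨SeparationQuotient (Pt D), inferInstance,
    fun s => SeparationQuotient.mk (Pt.mk s), ?_, ?_, ?_⟩
  · exact ⟨by rw [← (SeparationQuotient.surjective_mk (X := Pt D)).range_eq]
              exact isCompact_range SeparationQuotient.continuous_mk⟩
  · exact SeparationQuotient.surjective_mk.comp hsurj0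
  · intro s t
    rw [SeparationQuotient.dist_mk]
    rfl

end Vern
theorem statement5 (f : ℝ → ℝ) (hf : IsExcursion f) :
    ContinuousOn (fun p : ℝ × ℝ => dL f p.1 p.2) (Icc (0:ℝ) 1 ×ˢ Icc (0:ℝ) 1) ∧
    ContinuousOn (fun p : ℝ × ℝ => dT f p.1 p.2) (Icc (0:ℝ) 1 ×ˢ Icc (0:ℝ) 1) ∧
    ContinuousOn (fun p : ℝ × ℝ => dV f p.1 p.2) (Icc (0:ℝ) 1 ×ˢ Icc (0:ℝ) 1) ∧
    (∃ (X : Type) (m : MetricSpace X) (q : Icc (0:ℝ) 1 → X), CompactSpace X ∧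
        Function.Surjective q ∧ ∀ s t : Icc (0:ℝ) 1, dist (q s) (q t) = dL f s.1 t.1) ∧
    (∃ (X : Type) (m : MetricSpace X) (q : Icc (0:ℝ) 1 → X), CompactSpace X ∧
        Function.Surjective q ∧ ∀ s t : Icc (0:ℝ) 1, dist (q s) (q t) = dT f s.1 t.1) ∧
    (∃ (X : Type) (m : MetricSpace X) (q : Icc (0:ℝ) 1 → X), CompactSpace X ∧
        Function.Surjective q ∧ ∀ s t : Icc (0:ℝ) 1, dist (q s) (q t) = dV f s.1 t.1) := by
  refine ⟨?_, ?_, ?_, ?_, ?_, ?_⟩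
  · exact Vern.contOn_of_diag (dL f) (Vern.dL_symm f)
      (fun s hs t ht u hu => Vern.dL_triangle hf hs ht hu)
      (fun s₀ hs₀ ε hε => Vern.dL_diag hf hs₀ hε)
  · exact Vern.contOn_of_diag (dT f) (Vern.dT_symm f)
      (fun s hs t ht u hu => Vern.dT_triangle hf hs ht hu)
      (fun s₀ hs₀ ε hε => Vern.dT_diag hf hs₀ hε)
  · exact Vern.contOn_of_diag (dV f) (Vern.dV_symm f)
      (fun s hs t ht u hu => Vern.dV_triangle hf hs ht hu)
      (fun s₀ hs₀ ε hε => Vern.dV_diag hf hs₀ hε)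
  · exact Vern.quotient_exists (dL f) (fun s hs => Vern.dL_self hf hs) (Vern.dL_symm f)
      (fun s hs t ht u hu => Vern.dL_triangle hf hs ht hu)
      (fun s₀ hs₀ ε hε => Vern.dL_diag hf hs₀ hε)
  · exact Vern.quotient_exists (dT f) (fun s hs => Vern.dT_self hf hs) (Vern.dT_symm f)
      (fun s hs t ht u hu => Vern.dT_triangle hf hs ht hu)
      (fun s₀ hs₀ ε hε => Vern.dT_diag hf hs₀ hε)
  · exact Vern.quotient_exists (dV f) (fun s hs => Vern.dV_self hf hs) (Vern.dV_symm f)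
      (fun s hs t ht u hu => Vern.dV_triangle hf hs ht hu)
      (fun s₀ hs₀ ε hε => Vern.dV_diag hf hs₀ hε)
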